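/- Let d, n ≥ 1 and let f : ℝ^d → M_n(ℂ) be measurable and bounded. Suppose that for every δ > 0 there exist a matrix trigonometric polynomial T and a number R > 0 such that for all r ≥ R and all γ ∈ ℤ^d: r^{−d} ∫_{r(γ + [0,1]^d)} |f(ξ) − T(ξ)| dξ ≤ δ. Then there exists a matrix f⁰ ∈ M_n(ℂ) such that for every δ > 0 there is R > 0 with | r^{−d} ∫_{r(γ + [0,1]^d)} f(ξ) dξ − f⁰ | ≤ δ for all r ≥ R and all γ ∈ ℤ^d; in particular, the mean value of f over the scaled cells r(γ + [0,1]^d) exists, is independent of γ ∈ ℤ^d, and the convergence as r → ∞ is uniform in γ. -/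

import Mathlib

open MeasureTheory

noncomputable section

/-- `ℝ^d` with its Euclidean structure. -/
abbrev Ed (d : ℕ) := EuclideanSpace ℝ (Fin d)

/-- The cell `r•γ + [0,r]^d` of the rescaled lattice `rℤ^d`. -/
def cell (d : ℕ) (r : ℝ) (γ : Fin d → ℤ) : Set (Ed d) :=
  {x | ∀ i, r * γ i ≤ x i ∧ x i ≤ r * γ i + r}

/-- Frobenius norm of a complex `n × n` matrix. -/
def frob {n : ℕ} (A : Matrix (Fin n) (Fin n) ℂ) : ℝ :=
  Real.sqrt (∑ i, ∑ k, ‖A i k‖ ^ 2)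

/-- The matrix trigonometric polynomial `ξ ↦ Σ_{α ∈ s} e^{i α·ξ} c α`. -/
def trigPoly {d n : ℕ} (s : Finset (Ed d)) (c : Ed d → Matrix (Fin n) (Fin n) ℂ)
    (ξ : Ed d) : Matrix (Fin n) (Fin n) ℂ :=
  ∑ α ∈ s, Complex.exp (Complex.I * ((inner ℝ α ξ : ℝ) : ℂ)) • c α

/-! ### Frobenius norm lemmas -/

def toEuc {n : ℕ} (A : Matrix (Fin n) (Fin n) ℂ) : EuclideanSpace ℂ (Fin n × Fin n) :=
  (WithLp.equiv 2 _).symm (fun pq => A pq.1 pq.2)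

lemma frob_eq_norm {n : ℕ} (A : Matrix (Fin n) (Fin n) ℂ) : frob A = ‖toEuc A‖ := by
  rw [frob, EuclideanSpace.norm_eq]
  congr 1
  rw [Fintype.sum_prod_type]
  rfl

lemma toEuc_sub {n : ℕ} (A B : Matrix (Fin n) (Fin n) ℂ) :
    toEuc (A - B) = toEuc A - toEuc B := rfl

lemma toEuc_sum {n : ℕ} {ι : Type*} (s : Finset ι) (g : ι → Matrix (Fin n) (Fin n) ℂ) :
    toEuc (∑ x ∈ s, g x) = ∑ x ∈ s, toEuc (g x) := by
  classical
  induction s using Finset.induction with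
  | empty => rfl
  | insert _ _ h ih => rw [Finset.sum_insert h, Finset.sum_insert h, ← ih]; rfl

lemma toEuc_smul {n : ℕ} (z : ℂ) (A : Matrix (Fin n) (Fin n) ℂ) :
    toEuc (z • A) = z • toEuc A := rfl

lemma frob_nonneg {n : ℕ} (A : Matrix (Fin n) (Fin n) ℂ) : 0 ≤ frob A := by
  rw [frob_eq_norm]; exact norm_nonneg _

lemma frob_sub_le {n : ℕ} (A B C : Matrix (Fin n) (Fin n) ℂ) :
    frob (A - C) ≤ frob (A - B) + frob (B - C) := by
  simp only [frob_eq_norm, toEuc_sub]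
  exact norm_sub_le_norm_sub_add_norm_sub _ _ _

lemma frob_sub_le' {n : ℕ} (A B : Matrix (Fin n) (Fin n) ℂ) :
    frob (A - B) ≤ frob A + frob B := by
  simp only [frob_eq_norm, toEuc_sub]
  exact norm_sub_le _ _

lemma frob_smul {n : ℕ} (z : ℂ) (A : Matrix (Fin n) (Fin n) ℂ) :
    frob (z • A) = ‖z‖ * frob A := by
  simp only [frob_eq_norm, toEuc_smul, norm_smul]

lemma entry_le_frob {n : ℕ} (A : Matrix (Fin n) (Fin n) ℂ) (p q : Fin n) :
    ‖A p q‖ ≤ frob A := by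
  have h1 : ‖A p q‖ = Real.sqrt (‖A p q‖ ^ 2) := by
    rw [Real.sqrt_sq (norm_nonneg _)]
  rw [h1, frob]
  apply Real.sqrt_le_sqrt
  calc ‖A p q‖ ^ 2 ≤ ∑ k, ‖A p k‖ ^ 2 :=
        Finset.single_le_sum (f := fun k => ‖A p k‖ ^ 2) (fun i _ => by positivity)
          (Finset.mem_univ q)
    _ ≤ ∑ i, ∑ k, ‖A i k‖ ^ 2 :=
        Finset.single_le_sum (f := fun i => ∑ k, ‖A i k‖ ^ 2)
          (fun i _ => by positivity) (Finset.mem_univ p)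

lemma frob_le_sum {n : ℕ} (A : Matrix (Fin n) (Fin n) ℂ) :
    frob A ≤ ∑ p, ∑ q, ‖A p q‖ := by
  rw [frob]
  have h : ∑ i, ∑ k, ‖A i k‖ ^ 2 ≤ (∑ p, ∑ q, ‖A p q‖) ^ 2 := by
    have h2 := Finset.sum_sq_le_sq_sum_of_nonneg (s := Finset.univ)
      (f := fun p : Fin n × Fin n => ‖A p.1 p.2‖) (fun i _ => norm_nonneg _)
    simpa only [Fintype.sum_prod_type] using h2
  calc Real.sqrt (∑ i, ∑ k, ‖A i k‖ ^ 2) ≤ Real.sqrt ((∑ p, ∑ q, ‖A p q‖) ^ 2) :=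
        Real.sqrt_le_sqrt h
    _ = ∑ p, ∑ q, ‖A p q‖ := Real.sqrt_sq (by positivity)

lemma frob_sum_le {n : ℕ} {ι : Type*} (s : Finset ι) (g : ι → Matrix (Fin n) (Fin n) ℂ) :
    frob (∑ x ∈ s, g x) ≤ ∑ x ∈ s, frob (g x) := by
  simp only [frob_eq_norm, toEuc_sum]
  exact norm_sum_le _ _

/-! ### Cell lemmas -/

lemma cell_eq_preimage (d : ℕ) (r : ℝ) (γ : Fin d → ℤ) :
    cell d r γ = (MeasurableEquiv.toLp 2 (Fin d → ℝ)).symm ⁻¹'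
      (Set.univ.pi fun i => Set.Icc (r * γ i) (r * γ i + r)) := by
  ext ξ
  simp only [cell, Set.mem_preimage, Set.mem_pi, Set.mem_univ, Set.mem_Icc,
    forall_true_left, Set.mem_setOf_eq]
  rfl

lemma measurableSet_cell (d : ℕ) (r : ℝ) (γ : Fin d → ℤ) : MeasurableSet (cell d r γ) := by
  rw [cell_eq_preimage]
  exact (MeasurableEquiv.toLp 2 (Fin d → ℝ)).symm.measurable
    (MeasurableSet.univ_pi fun i => measurableSet_Icc)

lemma volume_cell (d : ℕ) {r : ℝ} (hr : 0 ≤ r) (γ : Fin d → ℤ) :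
    volume (cell d r γ) = ENNReal.ofReal (r ^ d) := by
  rw [cell_eq_preimage,
    (EuclideanSpace.volume_preserving_symm_measurableEquiv_toLp (Fin d)).measure_preimage
      (MeasurableSet.univ_pi fun i => measurableSet_Icc).nullMeasurableSet,
    volume_pi_pi]
  simp only [Real.volume_Icc, add_sub_cancel_left]
  rw [Finset.prod_const, Finset.card_univ, Fintype.card_fin, ← ENNReal.ofReal_pow hr]

lemma integrableOn_cell {d : ℕ} {E : Type*} [NormedAddCommGroup E] {g : Ed d → E}
    (hg : AEStronglyMeasurable g volume) {C : ℝ} (hC : ∀ ξ, ‖g ξ‖ ≤ C)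
    {r : ℝ} (hr : 0 ≤ r) (γ : Fin d → ℤ) :
    IntegrableOn g (cell d r γ) :=
  Measure.integrableOn_of_bounded
    (by rw [volume_cell d hr γ]; exact ENNReal.ofReal_ne_top) hg
    (Filter.Eventually.of_forall hC)

lemma indicator_pi_prod {d : ℕ} (S : Fin d → Set ℝ) (g : Fin d → ℝ → ℂ) (y : Fin d → ℝ) :
    (Set.univ.pi S).indicator (fun y => ∏ i, g i (y i)) y
      = ∏ i, (S i).indicator (g i) (y i) := by
  classical
  by_cases h : y ∈ Set.univ.pi S
  · rw [Set.indicator_of_mem h]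
    exact Finset.prod_congr rfl fun i _ =>
      (Set.indicator_of_mem (h i (Set.mem_univ i)) _).symm
  · rw [Set.indicator_of_notMem h]
    rw [Set.mem_pi] at h
    push_neg at h
    obtain ⟨i, _, hi⟩ := h
    exact (Finset.prod_eq_zero (Finset.mem_univ i)
      (Set.indicator_of_notMem hi _)).symm

lemma integral_pi_prod {d : ℕ} (S : Fin d → Set ℝ) (hS : ∀ i, MeasurableSet (S i))
    (g : Fin d → ℝ → ℂ) :
    ∫ y in Set.univ.pi S, ∏ i, g i (y i) = ∏ i, ∫ t in S i, g i t := by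
  rw [← integral_indicator (MeasurableSet.univ_pi hS)]
  have h : ∀ y, (Set.univ.pi S).indicator (fun y => ∏ i, g i (y i)) y
      = ∏ i, (S i).indicator (g i) (y i) := indicator_pi_prod S g
  rw [integral_congr_ae (Filter.Eventually.of_forall h)]
  rw [volume_pi, MeasureTheory.integral_fintype_prod_eq_prod (fun i t => (S i).indicator (g i) t)]
  exact Finset.prod_congr rfl fun i _ => integral_indicator (hS i)

lemma setIntegral_cell_prod {d : ℕ} (r : ℝ) (γ : Fin d → ℤ) (g : Fin d → ℝ → ℂ) :
    ∫ ξ in cell d r γ, ∏ i, g i (ξ i)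
      = ∏ i, ∫ t in Set.Icc (r * γ i) (r * γ i + r), g i t := by
  rw [cell_eq_preimage]
  rw [← integral_pi_prod _ (fun i => measurableSet_Icc) g]
  exact (EuclideanSpace.volume_preserving_symm_measurableEquiv_toLp (Fin d)).setIntegral_preimage_emb
    (MeasurableEquiv.toLp 2 (Fin d → ℝ)).symm.measurableEmbedding
    (fun y => ∏ i, g i (y i)) _

/-! ### Exponential lemmas -/

lemma exp_inner_eq {d : ℕ} (α ξ : Ed d) :
    Complex.exp (Complex.I * ((inner ℝ α ξ : ℝ) : ℂ))
      = ∏ i, Complex.exp (Complex.I * (α i : ℂ) * (ξ i : ℂ)) := by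
  rw [← Complex.exp_sum]
  congr 1
  have h : (inner ℝ α ξ : ℝ) = ∑ i, α i * ξ i := by
    simp [PiLp.inner_apply, RCLike.inner_apply, conj_trivial, mul_comm]
  rw [h]
  push_cast
  rw [Finset.mul_sum]
  exact Finset.sum_congr rfl fun i _ => by ring

lemma exp_I_mul_norm (β t : ℝ) : ‖Complex.exp (Complex.I * β * t)‖ = 1 := by
  have h : Complex.I * β * t = ((β * t : ℝ) : ℂ) * Complex.I := by push_cast; ring
  rw [h, Complex.norm_exp_ofReal_mul_I]

lemma norm_exp_inner {d : ℕ} (α ξ : Ed d) :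
    ‖Complex.exp (Complex.I * ((inner ℝ α ξ : ℝ) : ℂ))‖ = 1 := by
  rw [mul_comm, Complex.norm_exp_ofReal_mul_I]

lemma continuous_expInner {d : ℕ} (α : Ed d) :
    Continuous fun ξ : Ed d => Complex.exp (Complex.I * ((inner ℝ α ξ : ℝ) : ℂ)) :=
  Complex.continuous_exp.comp (continuous_const.mul
    (Complex.continuous_ofReal.comp (Continuous.inner continuous_const continuous_id)))

lemma I1_norm_le (a : ℝ) {r : ℝ} (hr : 0 ≤ r) (β : ℝ) :
    ‖∫ t in Set.Icc a (a + r), Complex.exp (Complex.I * β * t)‖ ≤ r := by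
  have h := norm_setIntegral_le_of_norm_le_const (μ := volume)
    (f := fun t : ℝ => Complex.exp (Complex.I * β * t))
    (s := Set.Icc a (a + r)) (C := 1)
    (by rw [Real.volume_Icc]; exact ENNReal.ofReal_lt_top)
    (fun t _ => le_of_eq (exp_I_mul_norm β t))
  calc _ ≤ 1 * (volume (Set.Icc a (a + r))).toReal := h
    _ = r := by rw [one_mul, Real.volume_Icc, add_sub_cancel_left, ENNReal.toReal_ofReal hr]

lemma I1_norm_le' (a : ℝ) {r : ℝ} (hr : 0 ≤ r) {β : ℝ} (hβ : β ≠ 0) :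
    ‖∫ t in Set.Icc a (a + r), Complex.exp (Complex.I * β * t)‖ ≤ 2 / |β| := by
  have hc : Complex.I * β ≠ 0 := by
    simp [Complex.I_ne_zero, Complex.ofReal_eq_zero, hβ]
  have key : ∫ t in Set.Icc a (a + r), Complex.exp (Complex.I * β * t)
      = (Complex.exp (Complex.I * β * (a + r)) - Complex.exp (Complex.I * β * a))
        / (Complex.I * β) := by
    rw [MeasureTheory.integral_Icc_eq_integral_Ioc,
      ← intervalIntegral.integral_of_le (by linarith)]
    rw [integral_exp_mul_complex hc]
    push_cast
    ring_nf
  rw [key]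
  rw [norm_div]
  have h1 : ‖Complex.exp (Complex.I * ↑β * (↑a + ↑r)) - Complex.exp (Complex.I * ↑β * ↑a)‖
      ≤ 2 := by
    have e1 : Complex.I * ↑β * (↑a + ↑r) = Complex.I * ↑β * ((a + r : ℝ) : ℂ) := by
      push_cast; ring
    calc _ ≤ ‖Complex.exp (Complex.I * ↑β * (↑a + ↑r))‖
          + ‖Complex.exp (Complex.I * ↑β * ↑a)‖ := norm_sub_le _ _
      _ ≤ 2 := by rw [e1, exp_I_mul_norm β (a + r), exp_I_mul_norm β a]; norm_num
  have h2 : ‖Complex.I * (β : ℂ)‖ = |β| := by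
    rw [norm_mul, Complex.norm_I, one_mul, Complex.norm_real,
      Real.norm_eq_abs]
  rw [h2]
  gcongr

/-! ### Averages -/

def cellAvgExp (d : ℕ) (r : ℝ) (γ : Fin d → ℤ) (α : Ed d) : ℂ :=
  ((r : ℂ) ^ d)⁻¹ * ∫ ξ in cell d r γ, Complex.exp (Complex.I * ((inner ℝ α ξ : ℝ) : ℂ))

def cellAvg {d n : ℕ} (f : Ed d → Matrix (Fin n) (Fin n) ℂ) (r : ℝ) (γ : Fin d → ℤ) :
    Matrix (Fin n) (Fin n) ℂ :=
  Matrix.of fun p q => ((r : ℂ) ^ d)⁻¹ * ∫ ξ in cell d r γ, f ξ p q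

def trigAvg {d n : ℕ} (s : Finset (Ed d)) (c : Ed d → Matrix (Fin n) (Fin n) ℂ)
    (r : ℝ) (γ : Fin d → ℤ) : Matrix (Fin n) (Fin n) ℂ :=
  ∑ α ∈ s, cellAvgExp d r γ α • c α

open Classical in
def e0 {d : ℕ} (α : Ed d) : ℂ := if α = 0 then 1 else 0

lemma e0_zero {d : ℕ} : e0 (0 : Ed d) = 1 := by simp [e0]
lemma e0_ne {d : ℕ} {α : Ed d} (hα : α ≠ 0) : e0 α = 0 := by simp [e0, hα]

lemma integral_cell_exp {d : ℕ} (r : ℝ) (γ : Fin d → ℤ) (α : Ed d) :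
    ∫ ξ in cell d r γ, Complex.exp (Complex.I * ((inner ℝ α ξ : ℝ) : ℂ))
      = ∏ i, ∫ t in Set.Icc (r * γ i) (r * γ i + r),
          Complex.exp (Complex.I * (α i : ℂ) * (t : ℂ)) := by
  rw [← setIntegral_cell_prod r γ (fun i t => Complex.exp (Complex.I * (α i : ℂ) * (t : ℂ)))]
  exact setIntegral_congr_fun (measurableSet_cell d r γ) (fun ξ _ => exp_inner_eq α ξ)

lemma norm_inv_pow {d : ℕ} {r : ℝ} (hr : 0 < r) : ‖((r : ℂ) ^ d)⁻¹‖ = (r ^ d)⁻¹ := by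
  rw [norm_inv, norm_pow, Complex.norm_real, Real.norm_eq_abs, abs_of_pos hr]

lemma expAvg {d : ℕ} (hd : 1 ≤ d) (α : Ed d) {ε : ℝ} (hε : 0 < ε) :
    ∃ R : ℝ, 0 < R ∧ ∀ r : ℝ, R ≤ r → ∀ γ : Fin d → ℤ,
      ‖cellAvgExp d r γ α - e0 α‖ ≤ ε := by
  by_cases hα : α = 0
  · refine ⟨1, one_pos, fun r hr γ => ?_⟩
    have hr0 : (0 : ℝ) < r := lt_of_lt_of_le one_pos hr
    subst hα
    have h1 : ∀ ξ : Ed d, Complex.exp (Complex.I * ((inner ℝ (0 : Ed d) ξ : ℝ) : ℂ)) = 1 := by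
      intro ξ; rw [inner_zero_left]; simp
    rw [e0_zero, cellAvgExp]
    simp only [h1]
    rw [setIntegral_const, measureReal_def, volume_cell d hr0.le γ, ENNReal.toReal_ofReal (by positivity)]
    have hne : ((r : ℂ)) ^ d ≠ 0 := pow_ne_zero _ (Complex.ofReal_ne_zero.mpr hr0.ne')
    simpa [inv_mul_cancel₀ hne] using hε.le
  · obtain ⟨j, hj⟩ : ∃ j, α j ≠ 0 := by
      by_contra h; push_neg at h; exact hα (by ext i; exact h i)
    refine ⟨max 1 (2 / (ε * |α j|)), lt_of_lt_of_le one_pos (le_max_left _ _), fun r hr γ => ?_⟩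
    have hr1 : (1 : ℝ) ≤ r := le_trans (le_max_left _ _) hr
    have hr0 : (0 : ℝ) < r := lt_of_lt_of_le one_pos hr1
    rw [cellAvgExp]
    simp only [e0_ne hα, sub_zero]
    rw [norm_mul, integral_cell_exp]
    rw [norm_inv_pow hr0, norm_prod]
    have hprod : ∏ i, ‖∫ t in Set.Icc (r * γ i) (r * γ i + r),
        Complex.exp (Complex.I * (α i : ℂ) * (t : ℂ))‖ ≤ (2 / |α j|) * r ^ (d - 1) := by
      rw [← Finset.mul_prod_erase Finset.univ _ (Finset.mem_univ j)]
      have h2 : ∏ i ∈ Finset.univ.erase j, ‖∫ t in Set.Icc (r * γ i) (r * γ i + r),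
          Complex.exp (Complex.I * (α i : ℂ) * (t : ℂ))‖ ≤ r ^ (d - 1) := by
        calc _ ≤ ∏ _i ∈ Finset.univ.erase j, r :=
              Finset.prod_le_prod (fun i _ => norm_nonneg _)
                (fun i _ => I1_norm_le (r * γ i) hr0.le (α i))
          _ = r ^ (d - 1) := by
              rw [Finset.prod_const, Finset.card_erase_of_mem (Finset.mem_univ j),
                Finset.card_univ, Fintype.card_fin]
      exact mul_le_mul (I1_norm_le' (r * γ j) hr0.le hj) h2
        (Finset.prod_nonneg (fun i _ => norm_nonneg _)) (by positivity)
    calc (r ^ d)⁻¹ * ∏ i, ‖∫ t in Set.Icc (r * γ i) (r * γ i + r),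
          Complex.exp (Complex.I * (α i : ℂ) * (t : ℂ))‖
        ≤ (r ^ d)⁻¹ * ((2 / |α j|) * r ^ (d - 1)) :=
          mul_le_mul_of_nonneg_left hprod (by positivity)
      _ = 2 / (r * |α j|) := by
          have hdd : r ^ d = r ^ (d - 1) * r := by
            rw [← pow_succ, Nat.sub_add_cancel hd]
          rw [hdd]
          have h4 : |α j| ≠ 0 := abs_ne_zero.mpr hj
          field_simp
      _ ≤ ε := by
          rw [div_le_iff₀ (by positivity)]
          have h3 : 2 / (ε * |α j|) ≤ r := le_trans (le_max_right _ _) hr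
          rw [div_le_iff₀ (by positivity)] at h3
          nlinarith [abs_pos.mpr hj, hε]

lemma expAvg_finset {d : ℕ} (hd : 1 ≤ d) (s : Finset (Ed d)) {ε : ℝ} (hε : 0 < ε) :
    ∃ R : ℝ, 0 < R ∧ ∀ α ∈ s, ∀ r : ℝ, R ≤ r → ∀ γ : Fin d → ℤ,
      ‖cellAvgExp d r γ α - e0 α‖ ≤ ε := by
  classical
  induction s using Finset.induction with
  | empty => exact ⟨1, one_pos, fun α hα => absurd hα (Finset.notMem_empty α)⟩
  | @insert a t ha ih =>
      obtain ⟨R₁, hR₁, h1⟩ := ih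
      obtain ⟨R₂, hR₂, h2⟩ := expAvg hd a hε
      refine ⟨max R₁ R₂, lt_of_lt_of_le hR₁ (le_max_left _ _), fun α hα r hr γ => ?_⟩
      rcases Finset.mem_insert.mp hα with h | h
      · subst h; exact h2 r (le_trans (le_max_right _ _) hr) γ
      · exact h1 α h r (le_trans (le_max_left _ _) hr) γ

/-! ### Trig poly entries -/

lemma trigPoly_entry {d n : ℕ} (s : Finset (Ed d)) (c : Ed d → Matrix (Fin n) (Fin n) ℂ)
    (ξ : Ed d) (p q : Fin n) :
    trigPoly s c ξ p q
      = ∑ α ∈ s, Complex.exp (Complex.I * ((inner ℝ α ξ : ℝ) : ℂ)) * c α p q := by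
  simp [trigPoly, Matrix.sum_apply, Matrix.smul_apply, smul_eq_mul]

lemma continuous_trigPoly_entry {d n : ℕ} (s : Finset (Ed d))
    (c : Ed d → Matrix (Fin n) (Fin n) ℂ) (p q : Fin n) :
    Continuous fun ξ => trigPoly s c ξ p q := by
  have h : (fun ξ => trigPoly s c ξ p q)
      = fun ξ => ∑ α ∈ s, Complex.exp (Complex.I * ((inner ℝ α ξ : ℝ) : ℂ)) * c α p q :=
    funext fun ξ => trigPoly_entry s c ξ p q
  rw [h]
  exact continuous_finset_sum s fun α _ => (continuous_expInner α).mul continuous_const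

lemma frob_trigPoly_le {d n : ℕ} (s : Finset (Ed d)) (c : Ed d → Matrix (Fin n) (Fin n) ℂ)
    (ξ : Ed d) : frob (trigPoly s c ξ) ≤ ∑ α ∈ s, frob (c α) := by
  refine (frob_sum_le _ _).trans (Finset.sum_le_sum fun α _ => ?_)
  rw [frob_smul, norm_exp_inner, one_mul]

lemma measurable_frob_sub {d n : ℕ} {f : Ed d → Matrix (Fin n) (Fin n) ℂ}
    (hmeas : ∀ p q, Measurable fun ξ => f ξ p q) (s : Finset (Ed d))
    (c : Ed d → Matrix (Fin n) (Fin n) ℂ) :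
    Measurable fun ξ => frob (f ξ - trigPoly s c ξ) := by
  have h : Measurable fun ξ => ∑ i, ∑ k, ‖(f ξ - trigPoly s c ξ) i k‖ ^ 2 :=
    Finset.measurable_sum _ fun i _ => Finset.measurable_sum _ fun k _ =>
      (((hmeas i k).sub (continuous_trigPoly_entry s c i k).measurable).norm).pow_const 2
  exact Real.continuous_sqrt.measurable.comp h

lemma claimA {d n : ℕ} (f : Ed d → Matrix (Fin n) (Fin n) ℂ)
    (hmeas : ∀ p q, Measurable fun ξ => f ξ p q) {M : ℝ} (hM : ∀ ξ, frob (f ξ) ≤ M)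
    (s : Finset (Ed d)) (c : Ed d → Matrix (Fin n) (Fin n) ℂ) {r δ : ℝ} (hr : 0 < r)
    (γ : Fin d → ℤ)
    (hδ : (r ^ d)⁻¹ * ∫ ξ in cell d r γ, frob (f ξ - trigPoly s c ξ) ≤ δ) :
    frob (cellAvg f r γ - trigAvg s c r γ) ≤ (n : ℝ) ^ 2 * δ := by
  have hfint : ∀ p q, IntegrableOn (fun ξ => f ξ p q) (cell d r γ) volume := fun p q =>
    integrableOn_cell (hmeas p q).aestronglyMeasurable
      (fun ξ => (entry_le_frob (f ξ) p q).trans (hM ξ)) hr.le γ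
  have hTint : ∀ p q, IntegrableOn (fun ξ => trigPoly s c ξ p q) (cell d r γ) volume :=
    fun p q => integrableOn_cell (continuous_trigPoly_entry s c p q).aestronglyMeasurable
      (fun ξ => (entry_le_frob (trigPoly s c ξ) p q).trans (frob_trigPoly_le s c ξ)) hr.le γ
  have hfrobint : IntegrableOn (fun ξ => frob (f ξ - trigPoly s c ξ)) (cell d r γ) volume :=
    integrableOn_cell (measurable_frob_sub hmeas s c).aestronglyMeasurable
      (C := M + ∑ α ∈ s, frob (c α))
      (fun ξ => by
        rw [Real.norm_eq_abs, abs_of_nonneg (frob_nonneg _)]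
        exact (frob_sub_le' _ _).trans (add_le_add (hM ξ) (frob_trigPoly_le s c ξ)))
      hr.le γ
  have hentry : ∀ p q, ‖(cellAvg f r γ - trigAvg s c r γ) p q‖ ≤ δ := by
    intro p q
    have hT : ∫ ξ in cell d r γ, trigPoly s c ξ p q
        = ∑ α ∈ s, (∫ ξ in cell d r γ,
            Complex.exp (Complex.I * ((inner ℝ α ξ : ℝ) : ℂ))) * c α p q := by
      rw [setIntegral_congr_fun (measurableSet_cell d r γ)
        (fun ξ _ => trigPoly_entry s c ξ p q)]
      rw [integral_finset_sum s (fun α _ =>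
        integrableOn_cell ((continuous_expInner α).mul continuous_const).aestronglyMeasurable
          (g := fun ξ => Complex.exp (Complex.I * ((inner ℝ α ξ : ℝ) : ℂ)) * c α p q)
          (C := ‖c α p q‖)
          (fun ξ => by rw [norm_mul, norm_exp_inner, one_mul]) hr.le γ)]
      exact Finset.sum_congr rfl fun α _ => integral_mul_const _ _
    have he : (cellAvg f r γ - trigAvg s c r γ) p q
        = ((r : ℂ) ^ d)⁻¹ * ∫ ξ in cell d r γ, (f ξ p q - trigPoly s c ξ p q) := by
      rw [integral_sub (hfint p q) (hTint p q), Matrix.sub_apply]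
      have h1 : cellAvg f r γ p q = ((r : ℂ) ^ d)⁻¹ * ∫ ξ in cell d r γ, f ξ p q := rfl
      have h2 : trigAvg s c r γ p q
          = ((r : ℂ) ^ d)⁻¹ * ∫ ξ in cell d r γ, trigPoly s c ξ p q := by
        rw [hT, trigAvg, Matrix.sum_apply, Finset.mul_sum]
        exact Finset.sum_congr rfl fun α _ => by
          rw [Matrix.smul_apply, cellAvgExp, smul_eq_mul]; ring
      rw [h1, h2]; ring
    rw [he, norm_mul, norm_inv_pow hr]
    calc (r ^ d)⁻¹ * ‖∫ ξ in cell d r γ, (f ξ p q - trigPoly s c ξ p q)‖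
        ≤ (r ^ d)⁻¹ * ∫ ξ in cell d r γ, frob (f ξ - trigPoly s c ξ) := by
          refine mul_le_mul_of_nonneg_left ?_ (by positivity)
          refine (norm_integral_le_integral_norm _).trans ?_
          exact setIntegral_mono_on ((hfint p q).sub (hTint p q)).norm hfrobint
            (measurableSet_cell d r γ)
            (fun ξ _ => entry_le_frob (f ξ - trigPoly s c ξ) p q)
      _ ≤ δ := hδ
  calc frob (cellAvg f r γ - trigAvg s c r γ)
      ≤ ∑ p, ∑ q, ‖(cellAvg f r γ - trigAvg s c r γ) p q‖ := frob_le_sum _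
    _ ≤ ∑ _p : Fin n, ∑ _q : Fin n, δ :=
        Finset.sum_le_sum fun p _ => Finset.sum_le_sum fun q _ => hentry p q
    _ = (n : ℝ) ^ 2 * δ := by
        simp only [Finset.sum_const, Finset.card_univ, Fintype.card_fin, nsmul_eq_mul]
        ring

lemma claimB {d n : ℕ} (s : Finset (Ed d)) (c : Ed d → Matrix (Fin n) (Fin n) ℂ)
    (r r' : ℝ) (γ γ' : Fin d → ℤ) :
    frob (trigAvg s c r γ - trigAvg s c r' γ')
      ≤ ∑ α ∈ s, ‖cellAvgExp d r γ α - cellAvgExp d r' γ' α‖ * frob (c α) := by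
  rw [trigAvg, trigAvg, ← Finset.sum_sub_distrib]
  refine (frob_sum_le _ _).trans (Finset.sum_le_sum fun α _ => ?_)
  rw [← sub_smul, frob_smul]

lemma frob_sub_comm {n : ℕ} (A B : Matrix (Fin n) (Fin n) ℂ) :
    frob (A - B) = frob (B - A) := by
  simp only [frob_eq_norm, toEuc_sub]
  exact norm_sub_rev _ _

lemma keyCauchy {d n : ℕ} (hd : 1 ≤ d) (f : Ed d → Matrix (Fin n) (Fin n) ℂ)
    (hmeas : ∀ p q, Measurable fun ξ => f ξ p q) {M : ℝ} (hM : ∀ ξ, frob (f ξ) ≤ M)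
    (happrox : ∀ δ : ℝ, 0 < δ →
      ∃ (s : Finset (Ed d)) (c : Ed d → Matrix (Fin n) (Fin n) ℂ) (R : ℝ),
        0 < R ∧
        ∀ r : ℝ, R ≤ r → ∀ γ : Fin d → ℤ,
          (r ^ d)⁻¹ * ∫ ξ in cell d r γ, frob (f ξ - trigPoly s c ξ) ≤ δ)
    {ε : ℝ} (hε : 0 < ε) :
    ∃ R : ℝ, 0 < R ∧ ∀ r : ℝ, R ≤ r → ∀ r' : ℝ, R ≤ r' → ∀ γ γ' : Fin d → ℤ,
      frob (cellAvg f r γ - cellAvg f r' γ') ≤ ε := by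
  have hn2 : (0 : ℝ) < (n : ℝ) ^ 2 + 1 := by positivity
  set δ := ε / (4 * ((n : ℝ) ^ 2 + 1)) with hδdef
  have hδ : 0 < δ := by positivity
  obtain ⟨s, c, R₀, hR₀, happ⟩ := happrox δ hδ
  set C := ∑ α ∈ s, frob (c α) with hCdef
  have hC : 0 ≤ C := Finset.sum_nonneg fun α _ => frob_nonneg _
  set ε' := ε / (4 * (C + 1)) with hε'def
  have hε' : 0 < ε' := by positivity
  obtain ⟨R₂, hR₂, h2⟩ := expAvg_finset hd s hε'
  refine ⟨max R₀ R₂, lt_of_lt_of_le hR₀ (le_max_left _ _), fun r hr r' hr' γ γ' => ?_⟩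
  have hr0 : 0 < r := lt_of_lt_of_le (lt_of_lt_of_le hR₀ (le_max_left _ _)) hr
  have hr0' : 0 < r' := lt_of_lt_of_le (lt_of_lt_of_le hR₀ (le_max_left _ _)) hr'
  have ha1 : frob (cellAvg f r γ - trigAvg s c r γ) ≤ (n : ℝ) ^ 2 * δ :=
    claimA f hmeas hM s c hr0 γ (happ r (le_trans (le_max_left _ _) hr) γ)
  have ha2 : frob (cellAvg f r' γ' - trigAvg s c r' γ') ≤ (n : ℝ) ^ 2 * δ :=
    claimA f hmeas hM s c hr0' γ' (happ r' (le_trans (le_max_left _ _) hr') γ')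
  have hb : frob (trigAvg s c r γ - trigAvg s c r' γ') ≤ 2 * ε' * C := by
    refine (claimB s c r r' γ γ').trans ?_
    have hterm : ∀ α ∈ s, ‖cellAvgExp d r γ α - cellAvgExp d r' γ' α‖ * frob (c α)
        ≤ (2 * ε') * frob (c α) := by
      intro α hα
      refine mul_le_mul_of_nonneg_right ?_ (frob_nonneg _)
      calc ‖cellAvgExp d r γ α - cellAvgExp d r' γ' α‖
          ≤ ‖cellAvgExp d r γ α - e0 α‖ + ‖e0 α - cellAvgExp d r' γ' α‖ :=
            norm_sub_le_norm_sub_add_norm_sub _ _ _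
        _ ≤ ε' + ε' := add_le_add
            (h2 α hα r (le_trans (le_max_right _ _) hr) γ)
            (by rw [norm_sub_rev]; exact h2 α hα r' (le_trans (le_max_right _ _) hr') γ')
        _ = 2 * ε' := by ring
    calc ∑ α ∈ s, ‖cellAvgExp d r γ α - cellAvgExp d r' γ' α‖ * frob (c α)
        ≤ ∑ α ∈ s, (2 * ε') * frob (c α) := Finset.sum_le_sum hterm
      _ = 2 * ε' * C := by rw [← Finset.mul_sum]
  have hfinal : frob (cellAvg f r γ - cellAvg f r' γ') ≤
      (n : ℝ) ^ 2 * δ + (2 * ε' * C + (n : ℝ) ^ 2 * δ) := by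
    refine (frob_sub_le _ (trigAvg s c r γ) _).trans (add_le_add ha1 ?_)
    refine (frob_sub_le _ (trigAvg s c r' γ') _).trans (add_le_add hb ?_)
    rw [frob_sub_comm]
    exact ha2
  refine hfinal.trans ?_
  have e1 : (n : ℝ) ^ 2 * δ ≤ ε / 4 := by
    rw [hδdef]
    have heq : (n : ℝ) ^ 2 * (ε / (4 * ((n : ℝ) ^ 2 + 1)))
        = ((n : ℝ) ^ 2 * ε) / (4 * ((n : ℝ) ^ 2 + 1)) := by ring
    rw [heq, div_le_div_iff₀ (by positivity) (by norm_num)]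
    nlinarith
  have e2 : 2 * ε' * C ≤ ε / 2 := by
    rw [hε'def]
    have heq : 2 * (ε / (4 * (C + 1))) * C = (2 * ε * C) / (4 * (C + 1)) := by ring
    rw [heq, div_le_div_iff₀ (by positivity) (by norm_num)]
    nlinarith
  linarith

/-- Claim (5.29) of Section 3.5: a bounded measurable matrix
function approximable by trigonometric polynomials uniformly in the Weyl sense
(over all scaled cells `r(γ + [0,1]^d)`, `γ ∈ ℤ^d`) possesses a mean value `f⁰`,
independent of `γ`, with uniform-in-`γ` convergence of the cell averages. -/
theorem stmt_16 (d n : ℕ) (hd : 1 ≤ d) (hn : 1 ≤ n)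
    (f : Ed d → Matrix (Fin n) (Fin n) ℂ)
    (hmeas : ∀ p q, Measurable fun ξ => f ξ p q)
    (hbdd : ∃ M : ℝ, ∀ ξ, frob (f ξ) ≤ M)
    (happrox : ∀ δ : ℝ, 0 < δ →
      ∃ (s : Finset (Ed d)) (c : Ed d → Matrix (Fin n) (Fin n) ℂ) (R : ℝ),
        0 < R ∧
        ∀ r : ℝ, R ≤ r → ∀ γ : Fin d → ℤ,
          (r ^ d)⁻¹ * ∫ ξ in cell d r γ, frob (f ξ - trigPoly s c ξ) ≤ δ) :
    ∃ f₀ : Matrix (Fin n) (Fin n) ℂ,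
      ∀ δ : ℝ, 0 < δ → ∃ R : ℝ, 0 < R ∧
        ∀ r : ℝ, R ≤ r → ∀ γ : Fin d → ℤ,
          frob ((Matrix.of fun p q => ((r : ℂ) ^ d)⁻¹ * ∫ ξ in cell d r γ, f ξ p q) - f₀)
            ≤ δ := by
  obtain ⟨M, hM⟩ := hbdd
  have key := fun {ε : ℝ} (hε : 0 < ε) => keyCauchy hd f hmeas hM happrox hε
  -- a sequence of radii
  have hseq : ∀ k : ℕ, ∃ R : ℝ, 0 < R ∧ ∀ r : ℝ, R ≤ r → ∀ r' : ℝ, R ≤ r' →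
      ∀ γ γ' : Fin d → ℤ, frob (cellAvg f r γ - cellAvg f r' γ') ≤ 1 / ((k : ℝ) + 1) :=
    fun k => key (by positivity)
  choose Rs hRspos hRs using hseq
  set h : ℕ → EuclideanSpace ℂ (Fin n × Fin n) := fun k => toEuc (cellAvg f (Rs k) 0) with hh
  have hdist : ∀ k j : ℕ, dist (h k) (h j) ≤ 1 / ((k : ℝ) + 1) + 1 / ((j : ℝ) + 1) := by
    intro k j
    set rm := max (Rs k) (Rs j)
    have h1 : frob (cellAvg f (Rs k) 0 - cellAvg f rm 0) ≤ 1 / ((k : ℝ) + 1) :=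
      hRs k (Rs k) le_rfl rm (le_max_left _ _) 0 0
    have h2 : frob (cellAvg f rm 0 - cellAvg f (Rs j) 0) ≤ 1 / ((j : ℝ) + 1) := by
      rw [frob_sub_comm]
      exact hRs j (Rs j) le_rfl rm (le_max_right _ _) 0 0
    calc dist (h k) (h j) = ‖h k - h j‖ := dist_eq_norm _ _
      _ = frob (cellAvg f (Rs k) 0 - cellAvg f (Rs j) 0) := by
          rw [frob_eq_norm, toEuc_sub]
      _ ≤ _ := (frob_sub_le _ (cellAvg f rm 0) _).trans (add_le_add h1 h2)
  have hcauchy : CauchySeq h := by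
    rw [Metric.cauchySeq_iff]
    intro ε hε
    obtain ⟨N, hN⟩ := exists_nat_gt (2 / ε)
    refine ⟨N, fun m hm j hj => ?_⟩
    have hNpos : (0 : ℝ) < (N : ℝ) + 1 := by positivity
    have hb : ∀ i : ℕ, N ≤ i → 1 / ((i : ℝ) + 1) ≤ 1 / ((N : ℝ) + 1) := by
      intro i hi
      apply one_div_le_one_div_of_le hNpos
      have := (Nat.cast_le (α := ℝ)).mpr hi
      linarith
    have h2 : 2 / ((N : ℝ) + 1) < ε := by
      rw [div_lt_iff₀ hNpos]
      rw [div_lt_iff₀ hε] at hN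
      nlinarith
    calc dist (h m) (h j) ≤ 1 / ((m : ℝ) + 1) + 1 / ((j : ℝ) + 1) := hdist m j
      _ ≤ 1 / ((N : ℝ) + 1) + 1 / ((N : ℝ) + 1) := add_le_add (hb m hm) (hb j hj)
      _ = 2 / ((N : ℝ) + 1) := by ring
      _ < ε := h2
  obtain ⟨v, hv⟩ := cauchySeq_tendsto_of_complete hcauchy
  refine ⟨Matrix.of fun p q => v (p, q), ?_⟩
  set f₀ : Matrix (Fin n) (Fin n) ℂ := Matrix.of fun p q => v (p, q) with hf₀
  have hveq : toEuc f₀ = v := by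
    ext pq
    simp [toEuc, hf₀]
  intro δ hδ
  obtain ⟨R, hRpos, hkey⟩ := key (show (0:ℝ) < δ / 2 by positivity)
  -- choose k with both smallness conditions
  have ht1 : Filter.Tendsto (fun k : ℕ => 1 / ((k : ℝ) + 1)) Filter.atTop (nhds 0) :=
    tendsto_one_div_add_atTop_nhds_zero_nat
  have hev1 : ∀ᶠ k : ℕ in Filter.atTop, 1 / ((k : ℝ) + 1) ≤ δ / 4 := by
    obtain ⟨N₁, hN₁⟩ := exists_nat_gt (4 / δ)
    refine Filter.eventually_atTop.mpr ⟨N₁, fun k hk => ?_⟩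
    have hk' : N₁ ≤ k := hk
    have hkr : (4 / δ : ℝ) ≤ (k : ℝ) + 1 := by
      have := (Nat.cast_le (α := ℝ)).mpr hk'
      linarith
    rw [div_le_iff₀ (by positivity)]
    rw [div_le_iff₀ hδ] at hkr
    nlinarith
  have hev2 : ∀ᶠ k in Filter.atTop, ‖h k - v‖ ≤ δ / 4 := by
    have hball : ∀ᶠ x : EuclideanSpace ℂ (Fin n × Fin n) in nhds v, dist x v ≤ δ / 4 :=
      Metric.closedBall_mem_nhds v (by positivity)
    exact (hv.eventually hball).mono fun k hk => by rwa [dist_eq_norm] at hk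
  obtain ⟨k, hk1, hk2⟩ := (hev1.and hev2).exists
  refine ⟨max R (Rs k), lt_of_lt_of_le hRpos (le_max_left _ _), fun r hr γ => ?_⟩
  show frob (cellAvg f r γ - f₀) ≤ δ
  set R' := max R (Rs k) with hR'
  have hstep1 : frob (cellAvg f r γ - cellAvg f R' 0) ≤ δ / 2 :=
    hkey r (le_trans (le_max_left _ _) hr) R' (le_max_left _ _) γ 0
  have hstep2 : frob (cellAvg f R' 0 - cellAvg f (Rs k) 0) ≤ 1 / ((k : ℝ) + 1) := by
    rw [frob_sub_comm]
    exact hRs k (Rs k) le_rfl R' (le_max_right _ _) 0 0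
  have hstep3 : frob (cellAvg f (Rs k) 0 - f₀) ≤ δ / 4 := by
    rw [frob_eq_norm, toEuc_sub, hveq]
    exact hk2
  calc frob (cellAvg f r γ - f₀)
      ≤ frob (cellAvg f r γ - cellAvg f R' 0) + frob (cellAvg f R' 0 - f₀) :=
        frob_sub_le _ _ _
    _ ≤ δ / 2 + (1 / ((k : ℝ) + 1) + δ / 4) := by
        refine add_le_add hstep1 ?_
        exact (frob_sub_le _ (cellAvg f (Rs k) 0) _).trans (add_le_add hstep2 hstep3)
    _ ≤ δ / 2 + (δ / 4 + δ / 4) := by linarith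
    _ = δ := by ring

end
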